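/- For every K > 0, u > 0 and λ ≥ 0, one has ∫_0^λ K(1 − e^{−zu})/(Kz + z²) dz = ∫_0^∞ ((1 − e^{−λv})/v) · e^{−Kv} (e^{K(v∧u)} − 1) dv, where v∧u denotes the minimum of v and u. -/

import Mathlib

open MeasureTheory Set

private lemma L1' {b : ℝ} (hb : 0 < b) (c : ℝ) :
    ∫ v in Ioi c, Real.exp (-(b * v)) = Real.exp (-(b * c)) / b := by
  have hderiv : ∀ x ∈ Ici c, HasDerivAt (fun x => -Real.exp (-(b * x)) / b)
      (Real.exp (-(b * x))) x := by
    intro x _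
    have h1 : HasDerivAt (fun x : ℝ => -(b * x)) (-b) x := by
      exact (((hasDerivAt_id x).const_mul b).neg).congr_deriv (by simp)
    have := (h1.exp.neg).div_const b
    refine this.congr_deriv ?_
    rw [div_eq_iff hb.ne']; ring
  have hint : IntegrableOn (fun x => Real.exp (-(b * x))) (Ioi c) := by
    simpa [neg_mul] using exp_neg_integrableOn_Ioi c hb
  have htend : Filter.Tendsto (fun x => -Real.exp (-(b * x)) / b) Filter.atTop (nhds 0) := by
    have h1 : Filter.Tendsto (fun x : ℝ => -(b * x)) Filter.atTop Filter.atBot := by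
      rw [Filter.tendsto_neg_atBot_iff]
      exact Filter.Tendsto.const_mul_atTop hb Filter.tendsto_id
    have h2 := (Real.tendsto_exp_atBot.comp h1).neg.div_const b
    simpa using h2
  have := integral_Ioi_of_hasDerivAt_of_tendsto' hderiv hint htend
  rw [this]; ring

private lemma L2' {b : ℝ} (hb : 0 < b) (c : ℝ) :
    ∫ x in (0:ℝ)..c, Real.exp (-(x * b)) = (1 - Real.exp (-(c * b))) / b := by
  have := intervalIntegral.integral_comp_mul_right (fun w => Real.exp (-w)) (a := 0) (b := c) hb.ne'
  simp only [zero_mul] at this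
  rw [this]
  rw [intervalIntegral.integral_comp_neg (fun w => Real.exp w)]
  rw [integral_exp]
  simp [smul_eq_mul]
  ring

private noncomputable def ff (K u v : ℝ) : ℝ :=
  Real.exp (-(K * v)) * (Real.exp (K * min v u) - 1)

private lemma ff_cont (K u : ℝ) : Continuous (ff K u) := by
  unfold ff
  fun_prop

private lemma ff_nonneg {K u : ℝ} (hK : 0 ≤ K) (hu : 0 ≤ u) {v : ℝ} (hv : 0 ≤ v) :
    0 ≤ ff K u v := by
  unfold ff
  have : (0:ℝ) ≤ K * min v u := mul_nonneg hK (le_min hv hu)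
  have h2 := Real.one_le_exp this
  have := (Real.exp_pos (-(K*v))).le
  nlinarith

private lemma ff_le {K u : ℝ} (hK : 0 < K) (v : ℝ) :
    ff K u v ≤ Real.exp (K * u) * Real.exp (-(K * v)) := by
  unfold ff
  rw [mul_comm (Real.exp (K*u))]
  apply mul_le_mul_of_nonneg_left _ (Real.exp_pos _).le
  have : Real.exp (K * min v u) ≤ Real.exp (K * u) :=
    Real.exp_le_exp.2 (mul_le_mul_of_nonneg_left (min_le_right _ _) hK.le)
  linarith

private lemma ff_integrable {K u : ℝ} (hK : 0 < K) (hu : 0 < u) :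
    IntegrableOn (ff K u) (Ioi (0:ℝ)) := by
  have hg : IntegrableOn (fun v => Real.exp (K * u) * Real.exp (-(K * v))) (Ioi (0:ℝ)) := by
    apply Integrable.const_mul
    have := exp_neg_integrableOn_Ioi 0 hK; simp only [neg_mul] at this; exact this
  refine Integrable.mono' hg ((ff_cont K u).aestronglyMeasurable) ?_
  filter_upwards [ae_restrict_mem measurableSet_Ioi] with v hv
  rw [Real.norm_eq_abs, abs_of_nonneg (ff_nonneg hK.le hu.le (le_of_lt hv))]
  exact ff_le hK v

private lemma G_integrable {K u : ℝ} (hK : 0 < K) (hu : 0 < u) {z : ℝ} (hz : 0 ≤ z) :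
    IntegrableOn (fun v => Real.exp (-(z * v)) * ff K u v) (Ioi (0:ℝ)) := by
  refine Integrable.mono' (ff_integrable hK hu)
    (Continuous.aestronglyMeasurable ((by fun_prop : Continuous fun v : ℝ => Real.exp (-(z*v))).mul (ff_cont K u))) ?_
  filter_upwards [ae_restrict_mem measurableSet_Ioi] with v hv
  have h0 : 0 ≤ ff K u v := ff_nonneg hK.le hu.le (le_of_lt hv)
  have h1 : Real.exp (-(z * v)) ≤ 1 := by
    rw [Real.exp_le_one_iff]
    have : 0 ≤ z * v := mul_nonneg hz (le_of_lt hv)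
    linarith
  rw [Real.norm_eq_abs, abs_of_nonneg (by positivity)]
  nlinarith [(Real.exp_pos (-(z*v))).le]

private lemma inner_eq (K u : ℝ) (hK : 0 < K) (hu : 0 < u) {z : ℝ} (hz : 0 < z) :
    ∫ v in Ioi (0:ℝ), Real.exp (-(z * v)) * ff K u v
      = K * (1 - Real.exp (-(z * u))) / (K * z + z ^ 2) := by
  have hGint := G_integrable hK hu hz.le
  have hzK : 0 < z + K := by linarith
  rw [← Ioc_union_Ioi_eq_Ioi hu.le,
    setIntegral_union Ioc_disjoint_Ioi_same measurableSet_Ioi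
      (hGint.mono_set Ioc_subset_Ioi_self)
      (hGint.mono_set (Ioi_subset_Ioi hu.le))]
  have e1 : ∫ v in Ioc (0:ℝ) u, Real.exp (-(z * v)) * ff K u v
      = (1 - Real.exp (-(u * z))) / z - (1 - Real.exp (-(u * (z + K)))) / (z + K) := by
    rw [setIntegral_congr_fun measurableSet_Ioc
      (g := fun v => Real.exp (-(v * z)) - Real.exp (-(v * (z + K))))]
    · rw [← intervalIntegral.integral_of_le hu.le,
        intervalIntegral.integral_sub
          (Continuous.intervalIntegrable (by fun_prop) _ _)
          (Continuous.intervalIntegrable (by fun_prop) _ _),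
        L2' hz u, L2' hzK u]
    · intro v hv
      have hmin : min v u = v := min_eq_left hv.2
      unfold ff
      dsimp only
      rw [hmin]
      simp only [mul_sub, mul_one, ← Real.exp_add]
      ring_nf
  have e2 : ∫ v in Ioi u, Real.exp (-(z * v)) * ff K u v
      = (Real.exp (K * u) - 1) * (Real.exp (-((z + K) * u)) / (z + K)) := by
    rw [setIntegral_congr_fun measurableSet_Ioi
      (g := fun v => (Real.exp (K * u) - 1) * Real.exp (-((z + K) * v)))]
    · rw [integral_const_mul, L1' hzK u]
    · intro v hv
      have hmin : min v u = u := min_eq_right (le_of_lt hv)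
      unfold ff
      dsimp only
      rw [hmin]
      simp only [mul_sub, sub_mul, mul_one, one_mul, ← Real.exp_add]
      ring_nf
  rw [e1, e2]
  have h1 : Real.exp (-(u * (z + K))) = Real.exp (-(u * z)) * Real.exp (-(K * u)) := by
    rw [← Real.exp_add]; ring_nf
  have h2 : Real.exp (-((z + K) * u)) = Real.exp (-(u * z)) * Real.exp (-(K * u)) := by
    rw [← Real.exp_add]; ring_nf
  have h4 : Real.exp (-(z * u)) = Real.exp (-(u * z)) := by ring_nf
  have h5 : Real.exp (K * u) = (Real.exp (-(K * u)))⁻¹ := by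
    rw [← neg_neg (K * u), Real.exp_neg, neg_neg]
  rw [h1, h2, h4, h5]
  have hz' : z ≠ 0 := hz.ne'
  have hzK' : z + K ≠ 0 := hzK.ne'
  have hd : K * z + z ^ 2 ≠ 0 := by nlinarith
  have hb : Real.exp (-(K * u)) ≠ 0 := (Real.exp_pos _).ne'
  field_simp
  ring

/-- For every K > 0, u > 0 and λ ≥ 0,
∫_0^λ K(1 − e^{−zu})/(Kz + z²) dz = ∫_0^∞ ((1 − e^{−λv})/v) e^{−Kv}(e^{K(v∧u)} − 1) dv. -/
theorem stmt_3 (K u lam : ℝ) (hK : 0 < K) (hu : 0 < u) (hlam : 0 ≤ lam) :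
    (∫ z in (0:ℝ)..lam, K * (1 - Real.exp (-(z * u))) / (K * z + z ^ 2)) =
      ∫ v in Ioi (0:ℝ),
        ((1 - Real.exp (-(lam * v))) / v) * (Real.exp (-(K * v)) * (Real.exp (K * min v u) - 1)) := by
  have hF : Integrable (Function.uncurry fun z v => Real.exp (-(z * v)) * ff K u v)
      ((volume.restrict (Ioc (0:ℝ) lam)).prod (volume.restrict (Ioi (0:ℝ)))) := by
    have hconst : Integrable (fun _ : ℝ => (1:ℝ)) (volume.restrict (Ioc (0:ℝ) lam)) := by
      refine integrableOn_const ?_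
      exact measure_Ioc_lt_top.ne
    have hprod : Integrable (fun p : ℝ × ℝ => (1:ℝ) * |ff K u p.2|)
        ((volume.restrict (Ioc (0:ℝ) lam)).prod (volume.restrict (Ioi (0:ℝ)))) :=
      Integrable.mul_prod hconst (ff_integrable hK hu).abs
    refine Integrable.mono' hprod
      (Continuous.aestronglyMeasurable
        ((by fun_prop : Continuous fun p : ℝ × ℝ => Real.exp (-(p.1 * p.2))).mul
          ((ff_cont K u).comp continuous_snd))) ?_
    rw [Measure.prod_restrict]
    filter_upwards [ae_restrict_mem (measurableSet_Ioc.prod measurableSet_Ioi)] with p hp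
    obtain ⟨hp1, hp2⟩ := hp
    have h0 : 0 ≤ ff K u p.2 := ff_nonneg hK.le hu.le (le_of_lt hp2)
    have h1 : Real.exp (-(p.1 * p.2)) ≤ 1 := by
      rw [Real.exp_le_one_iff]
      have : 0 ≤ p.1 * p.2 := mul_nonneg hp1.1.le (le_of_lt hp2)
      linarith
    simp only [Function.uncurry, Real.norm_eq_abs, one_mul]
    rw [abs_of_nonneg (by positivity), abs_of_nonneg h0]
    nlinarith [(Real.exp_pos (-(p.1 * p.2))).le]
  calc
    (∫ z in (0:ℝ)..lam, K * (1 - Real.exp (-(z * u))) / (K * z + z ^ 2))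
        = ∫ z in Ioc (0:ℝ) lam, K * (1 - Real.exp (-(z * u))) / (K * z + z ^ 2) :=
      intervalIntegral.integral_of_le hlam
    _ = ∫ z in Ioc (0:ℝ) lam, ∫ v in Ioi (0:ℝ), Real.exp (-(z * v)) * ff K u v := by
      refine setIntegral_congr_fun measurableSet_Ioc fun z hz => ?_
      exact (inner_eq K u hK hu hz.1).symm
    _ = ∫ v in Ioi (0:ℝ), ∫ z in Ioc (0:ℝ) lam, Real.exp (-(z * v)) * ff K u v :=
      integral_integral_swap hF
    _ = ∫ v in Ioi (0:ℝ),
        ((1 - Real.exp (-(lam * v))) / v) * (Real.exp (-(K * v)) * (Real.exp (K * min v u) - 1)) := by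
      refine setIntegral_congr_fun measurableSet_Ioi fun v hv => ?_
      have hv' : (0:ℝ) < v := hv
      rw [integral_mul_const, ← intervalIntegral.integral_of_le hlam, L2' hv' lam]
      rfl
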